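/- Let (P,⪯₊,⪯₋) be a compatible double poset and let Ψ : ℝ^P → ℝ^P be the double transfer map, Ψ(g) = Φ_{⪯₊}(g⁺) − Φ_{⪯₋}(g⁻). Then the map (g,t) ↦ (Ψ(g), t) maps the double chain polytope onto the double order polytope: {(Ψ(g), t) : (g,t) ∈ T_C(P,⪯₊,⪯₋)} = T_O(P,⪯₊,⪯₋). -/

import Mathlib

open Set Pointwise

/-- The order polytope of a finite poset `(P, le)`: order-preserving maps into `[0,1]`. -/
def orderPoly (P : Type*) [Fintype P] (le : P → P → Prop) : Set (P → ℝ) :=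
  {f | (∀ a, 0 ≤ f a ∧ f a ≤ 1) ∧ ∀ a b, le a b → f a ≤ f b}

/-- The chain polytope of a finite poset `(P, le)`. -/
def chainPoly (P : Type*) [Fintype P] (le : P → P → Prop) : Set (P → ℝ) :=
  {g | (∀ a, 0 ≤ g a) ∧
    ∀ C : Finset P, (∀ a ∈ C, ∀ b ∈ C, le a b ∨ le b a) → ∑ a ∈ C, g a ≤ 1}

/-- The double order polytope `T_O(P, lep, lem)`. -/
def doubleOrderPoly (P : Type*) [Fintype P] (lep lem : P → P → Prop) :
    Set ((P → ℝ) × ℝ) :=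
  convexHull ℝ
    (((fun f => (f, (1 : ℝ))) '' ((2 : ℝ) • orderPoly P lep)) ∪
     ((fun f => (f, (-1 : ℝ))) '' ((-2 : ℝ) • orderPoly P lem)))

/-- The double chain polytope `T_C(P, lep, lem)`. -/
def doubleChainPoly (P : Type*) [Fintype P] (lep lem : P → P → Prop) :
    Set ((P → ℝ) × ℝ) :=
  convexHull ℝ
    (((fun g => (g, (1 : ℝ))) '' ((2 : ℝ) • chainPoly P lep)) ∪
     ((fun g => (g, (-1 : ℝ))) '' ((-2 : ℝ) • chainPoly P lem)))

/-- A double poset is compatible if some linear order refines both partial orders. -/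
def Compatible (P : Type*) (lep lem : P → P → Prop) : Prop :=
  ∃ l : P → P → Prop, IsLinearOrder P l ∧
    (∀ a b, lep a b → l a b) ∧ (∀ a b, lem a b → l a b)

/-- The inverse transfer map of a poset `(P, le)` applied to `h : P → ℝ`:
`(Φ h)(b)` is the maximum of `∑_{a ∈ C} h(a)` over chains `C` ending at `b`. -/
noncomputable def transferInv {P : Type*} [Fintype P] (le : P → P → Prop)
    (h : P → ℝ) (b : P) : ℝ :=
  sSup {s : ℝ | ∃ C : Finset P, (∀ a ∈ C, ∀ a' ∈ C, le a a' ∨ le a' a) ∧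
    b ∈ C ∧ (∀ a ∈ C, le a b) ∧ s = ∑ a ∈ C, h a}

/-- The double transfer map `Ψ(g) = Φ_{⪯₊}(g⁺) − Φ_{⪯₋}(g⁻)` of a double poset. -/
noncomputable def doubleTransfer {P : Type*} [Fintype P]
    (lep lem : P → P → Prop) (g : P → ℝ) : P → ℝ :=
  fun b => transferInv lep (fun a => max (g a) 0) b -
    transferInv lem (fun a => max (-(g a)) 0) b



set_option linter.unusedSectionVars false

section Aux

variable {P : Type*} [Fintype P]

/-- The set of chain-sums defining `transferInv`. -/
def tset (le : P → P → Prop) (h : P → ℝ) (b : P) : Set ℝ :=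
  {s : ℝ | ∃ C : Finset P, (∀ a ∈ C, ∀ a' ∈ C, le a a' ∨ le a' a) ∧
    b ∈ C ∧ (∀ a ∈ C, le a b) ∧ s = ∑ a ∈ C, h a}

lemma transferInv_def (le : P → P → Prop) (h : P → ℝ) (b : P) :
    transferInv le h b = sSup (tset le h b) := rfl

lemma tset_finite (le : P → P → Prop) (h : P → ℝ) (b : P) : (tset le h b).Finite := by
  apply Set.Finite.subset (Set.finite_range (fun C : Finset P => ∑ a ∈ C, h a))
  rintro s ⟨C, -, -, -, rfl⟩
  exact ⟨C, rfl⟩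

lemma tset_nonempty (le : P → P → Prop) (hrefl : ∀ a, le a a) (h : P → ℝ) (b : P) :
    (tset le h b).Nonempty := by
  refine ⟨∑ a ∈ {b}, h a, {b}, ?_, by simp, ?_, rfl⟩
  · intro a ha a' ha'
    simp only [Finset.mem_singleton] at ha ha'
    subst ha; subst ha'; exact Or.inl (hrefl _)
  · intro a ha
    simp only [Finset.mem_singleton] at ha
    subst ha; exact hrefl _

lemma le_transferInv {le : P → P → Prop} {h : P → ℝ} {b : P} {s : ℝ}
    (hs : s ∈ tset le h b) : s ≤ transferInv le h b :=
  le_csSup (tset_finite le h b).bddAbove hs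

lemma transferInv_le {le : P → P → Prop} (hrefl : ∀ a, le a a) {h : P → ℝ} {b : P} {M : ℝ}
    (hM : ∀ s ∈ tset le h b, s ≤ M) : transferInv le h b ≤ M :=
  csSup_le (tset_nonempty le hrefl h b) hM

lemma self_le_transferInv {le : P → P → Prop} (hrefl : ∀ a, le a a) (h : P → ℝ) (b : P) :
    h b ≤ transferInv le h b := by
  apply le_transferInv (s := h b)
  refine ⟨{b}, ?_, by simp, ?_, by simp⟩
  · intro a ha a' ha'
    simp only [Finset.mem_singleton] at ha ha'
    subst ha; subst ha'; exact Or.inl (hrefl _)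
  · intro a ha
    simp only [Finset.mem_singleton] at ha
    subst ha; exact hrefl _

lemma transferInv_nonneg {le : P → P → Prop} (hrefl : ∀ a, le a a) {h : P → ℝ}
    (hh : ∀ a, 0 ≤ h a) (b : P) : 0 ≤ transferInv le h b :=
  (hh b).trans (self_le_transferInv hrefl h b)

lemma transferInv_mem {le : P → P → Prop} (hrefl : ∀ a, le a a) (h : P → ℝ) (b : P) :
    transferInv le h b ∈ tset le h b :=
  (tset_nonempty le hrefl h b).csSup_mem (tset_finite le h b)

lemma transferInv_mono {le : P → P → Prop} (hle : IsPartialOrder P le) {h : P → ℝ}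
    (hh : ∀ a, 0 ≤ h a) {a b : P} (hab : le a b) :
    transferInv le h a ≤ transferInv le h b := by
  classical
  apply transferInv_le hle.refl
  rintro s ⟨C, hC, haC, hCa, rfl⟩
  have hsub : C ⊆ insert b C := Finset.subset_insert _ _
  have h1 : ∑ x ∈ C, h x ≤ ∑ x ∈ insert b C, h x :=
    Finset.sum_le_sum_of_subset_of_nonneg hsub (fun i _ _ => hh i)
  refine h1.trans (le_transferInv ⟨insert b C, ?_, Finset.mem_insert_self _ _, ?_, rfl⟩)
  · intro x hx y hy
    rcases Finset.mem_insert.mp hx with hxb | hx'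
    · rcases Finset.mem_insert.mp hy with hyb | hy'
      · rw [hxb, hyb]; exact Or.inl (hle.refl _)
      · rw [hxb]; exact Or.inr (hle.trans _ _ _ (hCa y hy') hab)
    · rcases Finset.mem_insert.mp hy with hyb | hy'
      · rw [hyb]; exact Or.inl (hle.trans _ _ _ (hCa x hx') hab)
      · exact hC x hx' y hy'
  · intro x hx
    rcases Finset.mem_insert.mp hx with hxb | hx'
    · rw [hxb]; exact hle.refl _
    · exact hle.trans _ _ _ (hCa x hx') hab

lemma transferInv_congr {le : P → P → Prop} {h₁ h₂ : P → ℝ} {b : P}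
    (h12 : ∀ a, le a b → h₁ a = h₂ a) : transferInv le h₁ b = transferInv le h₂ b := by
  rw [transferInv_def, transferInv_def]
  congr 1
  ext s
  constructor
  · rintro ⟨C, hC, hbC, hCb, rfl⟩
    exact ⟨C, hC, hbC, hCb, Finset.sum_congr rfl (fun a ha => (h12 a (hCb a ha)))⟩
  · rintro ⟨C, hC, hbC, hCb, rfl⟩
    exact ⟨C, hC, hbC, hCb, Finset.sum_congr rfl (fun a ha => (h12 a (hCb a ha)).symm)⟩

/-- A nonempty finite chain has a maximum element. -/
lemma chain_exists_top {le : P → P → Prop} (hrefl : ∀ a, le a a)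
    (htrans : ∀ a b c, le a b → le b c → le a c) (C : Finset P) :
    (∀ a ∈ C, ∀ a' ∈ C, le a a' ∨ le a' a) → C.Nonempty → ∃ b ∈ C, ∀ a ∈ C, le a b := by
  classical
  induction C using Finset.induction_on with
  | empty => intro _ h; exact absurd h (by simp)
  | @insert x s hx ih =>
    intro hchain _
    rcases s.eq_empty_or_nonempty with rfl | hs
    · refine ⟨x, by simp, ?_⟩
      intro a ha
      simp only [Finset.mem_insert, Finset.notMem_empty, or_false] at ha
      subst ha
      exact hrefl _
    · have hchain' : ∀ a ∈ s, ∀ a' ∈ s, le a a' ∨ le a' a := fun a ha a' ha' =>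
        hchain a (Finset.mem_insert_of_mem ha) a' (Finset.mem_insert_of_mem ha')
      obtain ⟨m, hm, hmax⟩ := ih hchain' hs
      rcases hchain x (Finset.mem_insert_self _ _) m (Finset.mem_insert_of_mem hm) with hxm | hmx
      · refine ⟨m, Finset.mem_insert_of_mem hm, ?_⟩
        intro a ha
        rcases Finset.mem_insert.mp ha with rfl | ha
        · exact hxm
        · exact hmax a ha
      · refine ⟨x, Finset.mem_insert_self _ _, ?_⟩
        intro a ha
        rcases Finset.mem_insert.mp ha with rfl | ha
        · exact hrefl a
        · exact htrans _ _ _ (hmax a ha) hmx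

end Aux

section Aux2

variable {P : Type*} [Fintype P]

/-- Sup of `transferInv` over elements strictly below `x`. -/
noncomputable def bSup (le : P → P → Prop) (h : P → ℝ) (x : P) : ℝ :=
  sSup {s : ℝ | ∃ y, le y x ∧ y ≠ x ∧ s = transferInv le h y}

lemma bSup_set_finite (le : P → P → Prop) (h : P → ℝ) (x : P) :
    {s : ℝ | ∃ y, le y x ∧ y ≠ x ∧ s = transferInv le h y}.Finite := by
  apply Set.Finite.subset (Set.finite_range (transferInv le h))
  rintro s ⟨y, -, -, rfl⟩
  exact ⟨y, rfl⟩

lemma bSup_nonneg {le : P → P → Prop} (hrefl : ∀ a, le a a) {h : P → ℝ}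
    (hh : ∀ a, 0 ≤ h a) (x : P) : 0 ≤ bSup le h x := by
  rcases Set.eq_empty_or_nonempty {s : ℝ | ∃ y, le y x ∧ y ≠ x ∧ s = transferInv le h y} with
    he | hne
  · simp [bSup, he, Real.sSup_empty]
  · obtain ⟨s, hs⟩ := hne
    obtain ⟨y, hy, hne, rfl⟩ := hs
    calc (0 : ℝ) ≤ transferInv le h y := transferInv_nonneg hrefl hh y
    _ ≤ bSup le h x := le_csSup (bSup_set_finite le h x).bddAbove ⟨y, hy, hne, rfl⟩

lemma le_bSup {le : P → P → Prop} {h : P → ℝ} {x y : P} (hy : le y x) (hne : y ≠ x) :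
    transferInv le h y ≤ bSup le h x :=
  le_csSup (bSup_set_finite le h x).bddAbove ⟨y, hy, hne, rfl⟩

lemma bSup_le {le : P → P → Prop} {h : P → ℝ} {x : P} {M : ℝ}
    (hM : ∀ y, le y x → y ≠ x → transferInv le h y ≤ M) (h0 : 0 ≤ M) :
    bSup le h x ≤ M := by
  rcases Set.eq_empty_or_nonempty {s : ℝ | ∃ y, le y x ∧ y ≠ x ∧ s = transferInv le h y} with
    he | hne
  · simp [bSup, he, Real.sSup_empty, h0]
  · apply csSup_le hne
    rintro s ⟨y, hy, hney, rfl⟩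
    exact hM y hy hney

lemma bSup_congr {le : P → P → Prop} {h₁ h₂ : P → ℝ} {x : P}
    (hyp : ∀ y, le y x → y ≠ x → transferInv le h₁ y = transferInv le h₂ y) :
    bSup le h₁ x = bSup le h₂ x := by
  unfold bSup
  congr 1
  ext s
  constructor
  · rintro ⟨y, hy, hne, rfl⟩
    exact ⟨y, hy, hne, hyp y hy hne⟩
  · rintro ⟨y, hy, hne, rfl⟩
    exact ⟨y, hy, hne, (hyp y hy hne).symm⟩

/-- The fundamental recursion for `transferInv`. -/
lemma transferInv_eq_bSup {le : P → P → Prop} (hle : IsPartialOrder P le) {h : P → ℝ}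
    (hh : ∀ a, 0 ≤ h a) (x : P) :
    transferInv le h x = h x + bSup le h x := by
  classical
  apply le_antisymm
  · obtain ⟨C, hC, hxC, hCx, hsum⟩ := transferInv_mem hle.refl h x
    rw [hsum, ← Finset.add_sum_erase C h hxC]
    have : ∑ a ∈ C.erase x, h a ≤ bSup le h x := by
      rcases (C.erase x).eq_empty_or_nonempty with he | hne
      · rw [he, Finset.sum_empty]
        exact bSup_nonneg hle.refl hh x
      · have hchain : ∀ a ∈ C.erase x, ∀ a' ∈ C.erase x, le a a' ∨ le a' a := fun a ha a' ha' =>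
          hC a (Finset.mem_of_mem_erase ha) a' (Finset.mem_of_mem_erase ha')
        obtain ⟨y, hy, hymax⟩ := chain_exists_top hle.refl hle.trans _ hchain hne
        have h1 : ∑ a ∈ C.erase x, h a ≤ transferInv le h y :=
          le_transferInv ⟨C.erase x, hchain, hy, hymax, rfl⟩
        exact h1.trans (le_bSup (hCx y (Finset.mem_of_mem_erase hy)) (Finset.ne_of_mem_erase hy))
    linarith
  · rcases Set.eq_empty_or_nonempty {s : ℝ | ∃ y, le y x ∧ y ≠ x ∧ s = transferInv le h y} with
      he | hne
    · have : bSup le h x = 0 := by simp [bSup, he, Real.sSup_empty]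
      rw [this, add_zero]
      exact self_le_transferInv hle.refl h x
    · have hmem : bSup le h x ∈ _ := hne.csSup_mem (bSup_set_finite le h x)
      obtain ⟨y, hyx, hney, hval⟩ := hmem
      obtain ⟨C, hC, hyC, hCy, hsum⟩ := transferInv_mem hle.refl h y
      have hxnC : x ∉ C := by
        intro hxc
        exact hney (hle.antisymm _ _ hyx (hCy x hxc))
      have : h x + transferInv le h y ≤ transferInv le h x := by
        apply le_transferInv (s := h x + transferInv le h y)
        refine ⟨insert x C, ?_, Finset.mem_insert_self _ _, ?_, ?_⟩
        · intro a ha a' ha'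
          rcases Finset.mem_insert.mp ha with hax | ha2
          · rcases Finset.mem_insert.mp ha' with hax' | ha2'
            · rw [hax, hax']; exact Or.inl (hle.refl _)
            · rw [hax]; exact Or.inr (hle.trans _ _ _ (hCy a' ha2') hyx)
          · rcases Finset.mem_insert.mp ha' with hax' | ha2'
            · rw [hax']; exact Or.inl (hle.trans _ _ _ (hCy a ha2) hyx)
            · exact hC a ha2 a' ha2'
        · intro a ha
          rcases Finset.mem_insert.mp ha with hax | ha2
          · rw [hax]; exact hle.refl _
          · exact hle.trans _ _ _ (hCy a ha2) hyx
        · rw [Finset.sum_insert hxnC, hsum]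
      rw [hval]
      linarith

end Aux2

/-- Build a `LinearOrder` instance from an `IsLinearOrder` relation. -/
noncomputable def mkLinearOrder {P : Type*} (l : P → P → Prop) (h : IsLinearOrder P l) :
    LinearOrder P where
  le := l
  le_refl := fun a => h.toIsPartialOrder.toIsPreorder.toRefl.refl a
  le_trans := fun a b c => h.toIsPartialOrder.toIsPreorder.toIsTrans.trans a b c
  le_antisymm := fun a b => h.toIsPartialOrder.toAntisymm.antisymm a b
  le_total := h.toTotal.total
  toDecidableLE := fun a b => Classical.dec _

section Hull

variable {P : Type*} [Fintype P]

lemma orderPoly_convex (le : P → P → Prop) : Convex ℝ (orderPoly P le) := by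
  intro f hf g hg p q hp hq hpq
  refine ⟨fun a => ?_, fun a b hab => ?_⟩
  · have h1 := (hf.1 a).1
    have h2 := (hf.1 a).2
    have h3 := (hg.1 a).1
    have h4 := (hg.1 a).2
    have : (p • f + q • g) a = p * f a + q * g a := by
      simp [smul_eq_mul]
    rw [this]
    constructor
    · positivity
    · nlinarith
  · have h1 := hf.2 a b hab
    have h2 := hg.2 a b hab
    have e1 : (p • f + q • g) a = p * f a + q * g a := by simp [smul_eq_mul]
    have e2 : (p • f + q • g) b = p * f b + q * g b := by simp [smul_eq_mul]
    rw [e1, e2]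
    have := mul_le_mul_of_nonneg_left h1 hp
    have := mul_le_mul_of_nonneg_left h2 hq
    linarith

lemma chainPoly_convex (le : P → P → Prop) : Convex ℝ (chainPoly P le) := by
  intro f hf g hg p q hp hq hpq
  refine ⟨fun a => ?_, fun C hC => ?_⟩
  · have : (p • f + q • g) a = p * f a + q * g a := by simp [smul_eq_mul]
    rw [this]
    have := hf.1 a
    have := hg.1 a
    positivity
  · have e : ∑ a ∈ C, (p • f + q • g) a = p * ∑ a ∈ C, f a + q * ∑ a ∈ C, g a := by
      rw [Finset.mul_sum, Finset.mul_sum, ← Finset.sum_add_distrib]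
      apply Finset.sum_congr rfl
      intro a _
      simp [smul_eq_mul]
    rw [e]
    have h1 := hf.2 C hC
    have h2 := hg.2 C hC
    nlinarith

lemma orderPoly_zero_mem (le : P → P → Prop) : (0 : P → ℝ) ∈ orderPoly P le :=
  ⟨fun a => by norm_num, fun a b _ => le_refl _⟩

lemma chainPoly_zero_mem (le : P → P → Prop) : (0 : P → ℝ) ∈ chainPoly P le :=
  ⟨fun a => le_refl _, fun C _ => by simp⟩

/-- Membership characterization for `conv((S × {1}) ∪ (T × {-1}))`. -/
lemma mem_doubleHull_iff {S T : Set (P → ℝ)} (hS : Convex ℝ S) (hT : Convex ℝ T)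
    (hS0 : S.Nonempty) (hT0 : T.Nonempty) (x : (P → ℝ) × ℝ) :
    x ∈ convexHull ℝ (((fun f => (f, (1 : ℝ))) '' S) ∪ ((fun f => (f, (-1 : ℝ))) '' T)) ↔
      ∃ μ : ℝ, 0 ≤ μ ∧ μ ≤ 1 ∧ ∃ s ∈ S, ∃ u ∈ T,
        x.1 = μ • s + (1 - μ) • u ∧ x.2 = 2 * μ - 1 := by
  have hS' : Convex ℝ ((fun f => (f, (1 : ℝ))) '' S) := by
    rintro a ⟨s, hs, rfl⟩ b ⟨s', hs', rfl⟩ p q hp hq hpq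
    refine ⟨p • s + q • s', hS hs hs' hp hq hpq, ?_⟩
    rw [Prod.ext_iff]
    refine ⟨?_, ?_⟩
    · simp [Prod.smul_mk, Prod.mk_add_mk]
    · simp only [Prod.smul_mk, Prod.mk_add_mk, smul_eq_mul]
      simp only [mul_one]
      linarith
  have hT' : Convex ℝ ((fun f => (f, (-1 : ℝ))) '' T) := by
    rintro a ⟨s, hs, rfl⟩ b ⟨s', hs', rfl⟩ p q hp hq hpq
    refine ⟨p • s + q • s', hT hs hs' hp hq hpq, ?_⟩
    rw [Prod.ext_iff]
    refine ⟨?_, ?_⟩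
    · simp [Prod.smul_mk, Prod.mk_add_mk]
    · simp only [Prod.smul_mk, Prod.mk_add_mk, smul_eq_mul]
      simp only [mul_neg_one, mul_one]
      linarith
  rw [hS'.convexHull_union hT' (hS0.image _) (hT0.image _), mem_convexJoin]
  constructor
  · rintro ⟨a, ⟨s, hs, rfl⟩, b, ⟨u, hu, rfl⟩, hseg⟩
    obtain ⟨p, q, hp, hq, hpq, hxe⟩ := hseg
    refine ⟨p, hp, by linarith, s, hs, u, hu, ?_, ?_⟩
    · have h1 := congrArg Prod.fst hxe
      simp only [Prod.smul_mk, Prod.mk_add_mk] at h1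
      rw [← h1]
      have hq1 : q = 1 - p := by linarith
      rw [hq1]
    · have h2 := congrArg Prod.snd hxe
      simp only [Prod.smul_mk, Prod.mk_add_mk, smul_eq_mul] at h2
      rw [← h2]
      ring_nf
      linarith
  · rintro ⟨μ, h0, h1, s, hs, u, hu, hx1, hx2⟩
    refine ⟨(s, 1), ⟨s, hs, rfl⟩, (u, -1), ⟨u, hu, rfl⟩, μ, 1 - μ, h0, by linarith, by ring, ?_⟩
    rw [Prod.ext_iff]
    refine ⟨?_, ?_⟩
    · simp only [Prod.smul_mk, Prod.mk_add_mk, Prod.fst_add]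
      exact hx1.symm
    · simp only [Prod.smul_mk, Prod.mk_add_mk, smul_eq_mul]
      rw [hx2]
      ring

end Hull

section Construct

variable {P : Type*} [Fintype P]

lemma exists_doubleTransfer_inverse
    (lep lem : P → P → Prop) (hp : IsPartialOrder P lep) (hm : IsPartialOrder P lem)
    (l : P → P → Prop) (hl : IsLinearOrder P l)
    (hlp : ∀ a b, lep a b → l a b) (hlm : ∀ a b, lem a b → l a b)
    (Fp Fm : P → ℝ) (hFp0 : ∀ x, 0 ≤ Fp x) (hFm0 : ∀ x, 0 ≤ Fm x)
    (hFpm : ∀ a b, lep a b → Fp a ≤ Fp b) (hFmm : ∀ a b, lem a b → Fm a ≤ Fm b) :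
    ∃ g : P → ℝ,
      (∀ x, transferInv lep (fun a => max (g a) 0) x ≤ Fp x) ∧
      (∀ x, transferInv lem (fun a => max (-(g a)) 0) x ≤ Fm x) ∧
      (∀ x, doubleTransfer lep lem g x = Fp x - Fm x) := by
  classical
  letI : LinearOrder P := mkLinearOrder l hl
  have htr : ∀ a b c : P, l a b → l b c → l a c :=
    hl.toIsPartialOrder.toIsPreorder.toIsTrans.trans
  have hanti : ∀ a b : P, l a b → l b a → a = b :=
    hl.toIsPartialOrder.toAntisymm.antisymm
  have hlt : ∀ a b : P, a < b ↔ l a b ∧ a ≠ b := fun a b => lt_iff_le_and_ne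
  have wf : WellFounded ((· < ·) : P → P → Prop) := Finite.wellFounded_of_trans_of_irrefl _
  set T : (P → ℝ) → P → ℝ := fun gg x =>
    Fp x - Fm x - bSup lep (fun a => max (gg a) 0) x
      + bSup lem (fun a => max (-(gg a)) 0) x with hT
  -- congruence of T
  have Tcongr : ∀ g₁ g₂ : P → ℝ, ∀ x : P, (∀ y, y < x → g₁ y = g₂ y) → T g₁ x = T g₂ x := by
    intro g₁ g₂ x hyy
    have key : ∀ (le' : P → P → Prop), (∀ a b, le' a b → l a b) →
        (∀ a b c : P, le' a b → le' b c → le' a c) →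
        ∀ y, le' y x → y ≠ x → ∀ a, le' a y → g₁ a = g₂ a := by
      intro le' hle' htr' y hy hne a hay
      apply hyy
      refine (hlt a x).mpr ⟨htr _ _ _ (hle' _ _ hay) (hle' _ _ hy), ?_⟩
      intro haxeq
      subst haxeq
      exact hne (hanti y a (hle' _ _ hy) (hle' _ _ hay))
    have h1 : bSup lep (fun a => max (g₁ a) 0) x = bSup lep (fun a => max (g₂ a) 0) x := by
      apply bSup_congr
      intro y hy hne
      apply transferInv_congr
      intro a hay
      rw [key lep hlp hp.trans y hy hne a hay]
    have h2 : bSup lem (fun a => max (-(g₁ a)) 0) x = bSup lem (fun a => max (-(g₂ a)) 0) x := by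
      apply bSup_congr
      intro y hy hne
      apply transferInv_congr
      intro a hay
      rw [key lem hlm hm.trans y hy hne a hay]
    simp only [hT, h1, h2]
  -- rank function
  have hrlt : ∀ {y x : P}, y < x →
      (Finset.univ.filter (fun z : P => z < y)).card <
        (Finset.univ.filter (fun z : P => z < x)).card := by
    intro y x hyx
    have hsub : (Finset.univ.filter (fun z : P => z < y)) ⊆
        (Finset.univ.filter (fun z : P => z < x)) := by
      intro z hz
      simp only [Finset.mem_filter, Finset.mem_univ, true_and] at hz ⊢
      exact lt_trans hz hyx
    refine Finset.card_lt_card ((Finset.ssubset_iff_of_subset hsub).mpr ⟨y, ?_, ?_⟩)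
    · simp only [Finset.mem_filter, Finset.mem_univ, true_and]; exact hyx
    · simp only [Finset.mem_filter, Finset.mem_univ, true_and]; exact lt_irrefl y
  have hrcard : ∀ x : P, (Finset.univ.filter (fun z : P => z < x)).card < Fintype.card P := by
    intro x
    rw [← Finset.card_univ]
    refine Finset.card_lt_card
      ((Finset.ssubset_iff_of_subset (Finset.subset_univ _)).mpr ⟨x, Finset.mem_univ x, ?_⟩)
    simp only [Finset.mem_filter, Finset.mem_univ, true_and]
    exact lt_irrefl x
  set N := Fintype.card P with hN
  set g : P → ℝ := T^[N] 0 with hg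
  have hstab : ∀ x : P, ∀ k m : ℕ,
      (Finset.univ.filter (fun z : P => z < x)).card < k →
      (Finset.univ.filter (fun z : P => z < x)).card < m →
      T^[k] 0 x = T^[m] 0 x := by
    intro x
    refine wf.induction (C := fun x => ∀ k m : ℕ,
      (Finset.univ.filter (fun z : P => z < x)).card < k →
      (Finset.univ.filter (fun z : P => z < x)).card < m →
      T^[k] 0 x = T^[m] 0 x) x ?_
    intro z IH k m hk hm
    cases k with
    | zero => omega
    | succ k' =>
      cases m with
      | zero => omega
      | succ m' =>
        rw [Function.iterate_succ_apply', Function.iterate_succ_apply']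
        apply Tcongr
        intro y hy
        exact IH y hy k' m' (by have := hrlt hy; omega) (by have := hrlt hy; omega)
  have hfix : ∀ x : P, g x = T g x := by
    intro x
    have h1 : T g x = T^[N + 1] 0 x := by
      rw [Function.iterate_succ_apply']
    rw [h1]
    exact hstab x N (N + 1) (hrcard x) (lt_trans (hrcard x) (Nat.lt_succ_self N))
  have hrecp : ∀ x, transferInv lep (fun a => max (g a) 0) x
      = max (g x) 0 + bSup lep (fun a => max (g a) 0) x :=
    fun x => transferInv_eq_bSup hp (fun a => le_max_right _ _) x
  have hrecm : ∀ x, transferInv lem (fun a => max (-(g a)) 0) x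
      = max (-(g x)) 0 + bSup lem (fun a => max (-(g a)) 0) x :=
    fun x => transferInv_eq_bSup hm (fun a => le_max_right _ _) x
  have hbound : ∀ x : P, transferInv lep (fun a => max (g a) 0) x ≤ Fp x ∧
      transferInv lem (fun a => max (-(g a)) 0) x ≤ Fm x := by
    intro x
    refine wf.induction (C := fun z => transferInv lep (fun a => max (g a) 0) z ≤ Fp z ∧
      transferInv lem (fun a => max (-(g a)) 0) z ≤ Fm z) x ?_
    intro z IH
    have hBp : bSup lep (fun a => max (g a) 0) z ≤ Fp z := by
      refine bSup_le ?_ (hFp0 z)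
      intro y hy hne
      have hyz : y < z := (hlt y z).mpr ⟨hlp _ _ hy, hne⟩
      exact le_trans (IH y hyz).1 (hFpm y z hy)
    have hBm : bSup lem (fun a => max (-(g a)) 0) z ≤ Fm z := by
      refine bSup_le ?_ (hFm0 z)
      intro y hy hne
      have hyz : y < z := (hlt y z).mpr ⟨hlm _ _ hy, hne⟩
      exact le_trans (IH y hyz).2 (hFmm y z hy)
    have hfz : g z = Fp z - Fm z - bSup lep (fun a => max (g a) 0) z
        + bSup lem (fun a => max (-(g a)) 0) z := by
      have := hfix z
      simpa only [hT] using this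
    constructor
    · rw [hrecp z]
      rcases le_or_gt (g z) 0 with hgz | hgz
      · rw [max_eq_right hgz, zero_add]; exact hBp
      · rw [max_eq_left hgz.le]; linarith
    · rw [hrecm z]
      rcases le_or_gt 0 (g z) with hgz | hgz
      · rw [max_eq_right (by linarith : -(g z) ≤ 0), zero_add]; exact hBm
      · rw [max_eq_left (by linarith : (0:ℝ) ≤ -(g z))]; linarith
  refine ⟨g, fun x => (hbound x).1, fun x => (hbound x).2, ?_⟩
  intro x
  have h1 := hrecp x
  have h2 := hrecm x
  have h3 : g x = Fp x - Fm x - bSup lep (fun a => max (g a) 0) x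
      + bSup lem (fun a => max (-(g a)) 0) x := by
    have := hfix x
    simpa only [hT] using this
  have h4 : max (g x) 0 - max (-(g x)) 0 = g x := by
    rcases le_total (g x) 0 with h | h
    · rw [max_eq_right h, max_eq_left (by linarith : (0:ℝ) ≤ -(g x))]; ring
    · rw [max_eq_left h, max_eq_right (by linarith : -(g x) ≤ 0)]; ring
  show transferInv lep (fun a => max (g a) 0) x
      - transferInv lem (fun a => max (-(g a)) 0) x = Fp x - Fm x
  rw [h1, h2]
  linarith

end Construct

section Main

variable {P : Type*} [Fintype P]

lemma forward_incl (lep lem : P → P → Prop)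
    (hp : IsPartialOrder P lep) (hm : IsPartialOrder P lem) :
    (fun x : (P → ℝ) × ℝ => (doubleTransfer lep lem x.1, x.2)) ''
        doubleChainPoly P lep lem ⊆ doubleOrderPoly P lep lem := by
  classical
  have hCpc : Convex ℝ ((2 : ℝ) • chainPoly P lep) := (chainPoly_convex lep).smul _
  have hCmc : Convex ℝ ((-2 : ℝ) • chainPoly P lem) := (chainPoly_convex lem).smul _
  have hOpc : Convex ℝ ((2 : ℝ) • orderPoly P lep) := (orderPoly_convex lep).smul _
  have hOmc : Convex ℝ ((-2 : ℝ) • orderPoly P lem) := (orderPoly_convex lem).smul _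
  have hCp0 : ((2 : ℝ) • chainPoly P lep).Nonempty :=
    ⟨_, Set.smul_mem_smul_set (chainPoly_zero_mem lep)⟩
  have hCm0 : ((-2 : ℝ) • chainPoly P lem).Nonempty :=
    ⟨_, Set.smul_mem_smul_set (chainPoly_zero_mem lem)⟩
  have hOp0 : ((2 : ℝ) • orderPoly P lep).Nonempty :=
    ⟨_, Set.smul_mem_smul_set (orderPoly_zero_mem lep)⟩
  have hOm0 : ((-2 : ℝ) • orderPoly P lem).Nonempty :=
    ⟨_, Set.smul_mem_smul_set (orderPoly_zero_mem lem)⟩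
  rintro x ⟨⟨gg, t⟩, hmem, rfl⟩
  simp only [doubleChainPoly] at hmem
  rw [mem_doubleHull_iff hCpc hCmc hCp0 hCm0] at hmem
  obtain ⟨μ, hμ0, hμ1, c, hc, u, hu, hx1, hx2⟩ := hmem
  rw [Set.mem_smul_set] at hc hu
  obtain ⟨c₀, hc₀, rfl⟩ := hc
  obtain ⟨d₀, hd₀, rfl⟩ := hu
  simp only at hx1 hx2
  -- pointwise description of gg
  have hgga : ∀ a, gg a = μ * (2 * c₀ a) + (1 - μ) * (-2 * d₀ a) := by
    intro a
    have := congrFun hx1 a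
    simp only [Pi.add_apply, Pi.smul_apply, smul_eq_mul] at this
    rw [this]
  set Fp : P → ℝ := fun b => transferInv lep (fun a => max (gg a) 0) b with hFpdef
  set Fm : P → ℝ := fun b => transferInv lem (fun a => max (-(gg a)) 0) b with hFmdef
  have hposle : ∀ a, max (gg a) 0 ≤ μ * (2 * c₀ a) := by
    intro a
    have h1 := hc₀.1 a
    have h2 := hd₀.1 a
    apply max_le
    · rw [hgga a]; nlinarith
    · positivity
  have hnegle : ∀ a, max (-(gg a)) 0 ≤ (1 - μ) * (2 * d₀ a) := by
    intro a
    have h1 := hc₀.1 a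
    have h2 := hd₀.1 a
    apply max_le
    · rw [hgga a]; nlinarith
    · nlinarith
  have hFple : ∀ b, Fp b ≤ 2 * μ := by
    intro b
    apply transferInv_le hp.refl
    rintro s ⟨C, hC, -, -, rfl⟩
    calc ∑ a ∈ C, max (gg a) 0 ≤ ∑ a ∈ C, μ * (2 * c₀ a) :=
          Finset.sum_le_sum (fun a _ => hposle a)
      _ = 2 * μ * ∑ a ∈ C, c₀ a := by rw [Finset.mul_sum]; apply Finset.sum_congr rfl
                                      intro a _; ring
      _ ≤ 2 * μ * 1 := mul_le_mul_of_nonneg_left (hc₀.2 C hC) (by positivity)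
      _ = 2 * μ := mul_one _
  have hFmle : ∀ b, Fm b ≤ 2 * (1 - μ) := by
    intro b
    apply transferInv_le hm.refl
    rintro s ⟨C, hC, -, -, rfl⟩
    calc ∑ a ∈ C, max (-(gg a)) 0 ≤ ∑ a ∈ C, (1 - μ) * (2 * d₀ a) :=
          Finset.sum_le_sum (fun a _ => hnegle a)
      _ = 2 * (1 - μ) * ∑ a ∈ C, d₀ a := by rw [Finset.mul_sum]; apply Finset.sum_congr rfl
                                            intro a _; ring
      _ ≤ 2 * (1 - μ) * 1 := mul_le_mul_of_nonneg_left (hd₀.2 C hC) (by nlinarith)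
      _ = 2 * (1 - μ) := mul_one _
  have hFp0 : ∀ b, 0 ≤ Fp b := fun b => transferInv_nonneg hp.refl (fun a => le_max_right _ _) b
  have hFm0 : ∀ b, 0 ≤ Fm b := fun b => transferInv_nonneg hm.refl (fun a => le_max_right _ _) b
  have hFpmono : ∀ a b, lep a b → Fp a ≤ Fp b :=
    fun a b hab => transferInv_mono hp (fun a => le_max_right _ _) hab
  have hFmmono : ∀ a b, lem a b → Fm a ≤ Fm b :=
    fun a b hab => transferInv_mono hm (fun a => le_max_right _ _) hab
  set aF : P → ℝ := if μ = 0 then 0 else μ⁻¹ • Fp with haFdef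
  set bF : P → ℝ := if μ = 1 then 0 else -((1 - μ)⁻¹ • Fm) with hbFdef
  have haS : aF ∈ (2 : ℝ) • orderPoly P lep := by
    rw [Set.mem_smul_set]
    by_cases hμz : μ = 0
    · refine ⟨0, orderPoly_zero_mem lep, ?_⟩
      simp [haFdef, hμz]
    · have hμpos : 0 < μ := lt_of_le_of_ne hμ0 (Ne.symm hμz)
      refine ⟨fun b => 2⁻¹ * (μ⁻¹ * Fp b), ⟨fun b => ?_, fun a b hab => ?_⟩, ?_⟩
      · constructor
        · have := hFp0 b
          positivity
        · have h1 := hFple b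
          show (2:ℝ)⁻¹ * (μ⁻¹ * Fp b) ≤ 1
          rw [show (2:ℝ)⁻¹ * (μ⁻¹ * Fp b) = Fp b / (2 * μ) by field_simp]
          rw [div_le_one (by positivity)]
          linarith
      · have := hFpmono a b hab
        have h2 : (0:ℝ) ≤ 2⁻¹ * μ⁻¹ := by positivity
        calc 2⁻¹ * (μ⁻¹ * Fp a) = 2⁻¹ * μ⁻¹ * Fp a := by ring
          _ ≤ 2⁻¹ * μ⁻¹ * Fp b := mul_le_mul_of_nonneg_left this h2
          _ = 2⁻¹ * (μ⁻¹ * Fp b) := by ring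
      · funext b
        simp only [haFdef, if_neg hμz, Pi.smul_apply, smul_eq_mul]
        field_simp
  have hbT : bF ∈ (-2 : ℝ) • orderPoly P lem := by
    rw [Set.mem_smul_set]
    by_cases hμo : μ = 1
    · refine ⟨0, orderPoly_zero_mem lem, ?_⟩
      simp [hbFdef, hμo]
    · have hμlt : μ < 1 := lt_of_le_of_ne hμ1 hμo
      refine ⟨fun b => 2⁻¹ * ((1 - μ)⁻¹ * Fm b), ⟨fun b => ?_, fun a b hab => ?_⟩, ?_⟩
      · constructor
        · have := hFm0 b
          have : (0:ℝ) < 1 - μ := by linarith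
          positivity
        · have h1 := hFmle b
          show (2:ℝ)⁻¹ * ((1 - μ)⁻¹ * Fm b) ≤ 1
          rw [show (2:ℝ)⁻¹ * ((1-μ)⁻¹ * Fm b) = Fm b / (2 * (1 - μ)) by
            have h1μ : (1:ℝ) - μ ≠ 0 := by intro h; apply hμo; linarith
            field_simp]
          rw [div_le_one (by nlinarith)]
          linarith
      · have := hFmmono a b hab
        have h2 : (0:ℝ) ≤ 2⁻¹ * (1 - μ)⁻¹ := by
          have : (0:ℝ) < 1 - μ := by linarith
          positivity
        calc 2⁻¹ * ((1 - μ)⁻¹ * Fm a) = 2⁻¹ * (1 - μ)⁻¹ * Fm a := by ring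
          _ ≤ 2⁻¹ * (1 - μ)⁻¹ * Fm b := mul_le_mul_of_nonneg_left this h2
          _ = 2⁻¹ * ((1 - μ)⁻¹ * Fm b) := by ring
      · funext b
        simp only [hbFdef, if_neg hμo, Pi.neg_apply, Pi.smul_apply, smul_eq_mul]
        have h1μ : (1:ℝ) - μ ≠ 0 := by intro h; apply hμo; linarith
        field_simp
  have hμaF : ∀ b, μ * aF b = Fp b := by
    intro b
    by_cases hμz : μ = 0
    · have h1 : Fp b ≤ 0 := by have := hFple b; rw [hμz] at this; linarith
      have h2 := hFp0 b
      simp [haFdef, hμz]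
      linarith
    · simp only [haFdef, if_neg hμz, Pi.smul_apply, smul_eq_mul]
      field_simp
  have h1μbF : ∀ b, (1 - μ) * bF b = -(Fm b) := by
    intro b
    by_cases hμo : μ = 1
    · have h1 : Fm b ≤ 0 := by have := hFmle b; rw [hμo] at this; linarith
      have h2 := hFm0 b
      simp [hbFdef, hμo]
      linarith
    · have h1μ : (1:ℝ) - μ ≠ 0 := by intro h; apply hμo; linarith
      simp only [hbFdef, if_neg hμo, Pi.neg_apply, Pi.smul_apply, smul_eq_mul]
      field_simp
  simp only [doubleOrderPoly]
  rw [mem_doubleHull_iff hOpc hOmc hOp0 hOm0]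
  refine ⟨μ, hμ0, hμ1, aF, haS, bF, hbT, ?_, ?_⟩
  · funext b
    simp only [Pi.add_apply, Pi.smul_apply, smul_eq_mul]
    have e1 : doubleTransfer lep lem gg b = Fp b - Fm b := rfl
    show doubleTransfer lep lem gg b = μ * aF b + (1 - μ) * bF b
    rw [e1, hμaF b, h1μbF b]
    ring
  · exact hx2

end Main

section Main2

variable {P : Type*} [Fintype P]

lemma backward_incl (lep lem : P → P → Prop)
    (hp : IsPartialOrder P lep) (hm : IsPartialOrder P lem)
    (hcomp : Compatible P lep lem) :
    doubleOrderPoly P lep lem ⊆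
      (fun x : (P → ℝ) × ℝ => (doubleTransfer lep lem x.1, x.2)) ''
        doubleChainPoly P lep lem := by
  classical
  obtain ⟨l, hl, hlp, hlm⟩ := hcomp
  have hCpc : Convex ℝ ((2 : ℝ) • chainPoly P lep) := (chainPoly_convex lep).smul _
  have hCmc : Convex ℝ ((-2 : ℝ) • chainPoly P lem) := (chainPoly_convex lem).smul _
  have hOpc : Convex ℝ ((2 : ℝ) • orderPoly P lep) := (orderPoly_convex lep).smul _
  have hOmc : Convex ℝ ((-2 : ℝ) • orderPoly P lem) := (orderPoly_convex lem).smul _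
  have hCp0 : ((2 : ℝ) • chainPoly P lep).Nonempty :=
    ⟨_, Set.smul_mem_smul_set (chainPoly_zero_mem lep)⟩
  have hCm0 : ((-2 : ℝ) • chainPoly P lem).Nonempty :=
    ⟨_, Set.smul_mem_smul_set (chainPoly_zero_mem lem)⟩
  have hOp0 : ((2 : ℝ) • orderPoly P lep).Nonempty :=
    ⟨_, Set.smul_mem_smul_set (orderPoly_zero_mem lep)⟩
  have hOm0 : ((-2 : ℝ) • orderPoly P lem).Nonempty :=
    ⟨_, Set.smul_mem_smul_set (orderPoly_zero_mem lem)⟩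
  intro x hx
  simp only [doubleOrderPoly] at hx
  rw [mem_doubleHull_iff hOpc hOmc hOp0 hOm0] at hx
  obtain ⟨μ, hμ0, hμ1, a, ha, b, hb, hx1, hx2⟩ := hx
  rw [Set.mem_smul_set] at ha hb
  obtain ⟨a₀, ha₀, rfl⟩ := ha
  obtain ⟨b₀, hb₀, rfl⟩ := hb
  set Fp : P → ℝ := fun y => μ * (2 * a₀ y) with hFpdef
  set Fm : P → ℝ := fun y => (1 - μ) * (2 * b₀ y) with hFmdef
  have hx1' : ∀ y, x.1 y = Fp y - Fm y := by
    intro y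
    have := congrFun hx1 y
    simp only [Pi.add_apply, Pi.smul_apply, smul_eq_mul] at this
    rw [this, hFpdef, hFmdef]
    ring
  have hFp0 : ∀ y, 0 ≤ Fp y := by
    intro y
    have := (ha₀.1 y).1
    simp only [hFpdef]
    positivity
  have hFm0 : ∀ y, 0 ≤ Fm y := by
    intro y
    have h1 := (hb₀.1 y).1
    have h2 : (0:ℝ) ≤ 1 - μ := by linarith
    simp only [hFmdef]
    positivity
  have hFple : ∀ y, Fp y ≤ 2 * μ := by
    intro y
    have := (ha₀.1 y).2
    simp only [hFpdef]
    nlinarith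
  have hFmle : ∀ y, Fm y ≤ 2 * (1 - μ) := by
    intro y
    have := (hb₀.1 y).2
    have h2 : (0:ℝ) ≤ 1 - μ := by linarith
    simp only [hFmdef]
    nlinarith
  have hFpmono : ∀ u v, lep u v → Fp u ≤ Fp v := by
    intro u v huv
    have := ha₀.2 u v huv
    simp only [hFpdef]
    nlinarith
  have hFmmono : ∀ u v, lem u v → Fm u ≤ Fm v := by
    intro u v huv
    have := hb₀.2 u v huv
    have h2 : (0:ℝ) ≤ 1 - μ := by linarith
    simp only [hFmdef]
    nlinarith
  obtain ⟨g, hgp, hgm, hΨ⟩ := exists_doubleTransfer_inverse lep lem hp hm l hl hlp hlm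
    Fp Fm hFp0 hFm0 hFpmono hFmmono
  -- chain-sum bounds for the positive and negative parts of g
  have hsump : ∀ C : Finset P, (∀ u ∈ C, ∀ v ∈ C, lep u v ∨ lep v u) →
      ∑ y ∈ C, max (g y) 0 ≤ 2 * μ := by
    intro C hC
    rcases C.eq_empty_or_nonempty with rfl | hne
    · simp
      positivity
    · obtain ⟨tC, htC, htop⟩ := chain_exists_top hp.refl hp.trans C hC hne
      have h1 : ∑ y ∈ C, max (g y) 0 ≤ transferInv lep (fun y => max (g y) 0) tC :=
        le_transferInv ⟨C, hC, htC, htop, rfl⟩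
      have h2 := hgp tC
      have h3 := hFple tC
      linarith
  have hsumm : ∀ C : Finset P, (∀ u ∈ C, ∀ v ∈ C, lem u v ∨ lem v u) →
      ∑ y ∈ C, max (-(g y)) 0 ≤ 2 * (1 - μ) := by
    intro C hC
    rcases C.eq_empty_or_nonempty with rfl | hne
    · simp
      linarith
    · obtain ⟨tC, htC, htop⟩ := chain_exists_top hm.refl hm.trans C hC hne
      have h1 : ∑ y ∈ C, max (-(g y)) 0 ≤ transferInv lem (fun y => max (-(g y)) 0) tC :=
        le_transferInv ⟨C, hC, htC, htop, rfl⟩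
      have h2 := hgm tC
      have h3 := hFmle tC
      linarith
  set cF : P → ℝ := if μ = 0 then 0 else μ⁻¹ • (fun y => max (g y) 0) with hcFdef
  set uF : P → ℝ := if μ = 1 then 0 else -((1 - μ)⁻¹ • (fun y => max (-(g y)) 0)) with huFdef
  have hposg0 : ∀ y, 0 ≤ max (g y) 0 := fun y => le_max_right _ _
  have hnegg0 : ∀ y, 0 ≤ max (-(g y)) 0 := fun y => le_max_right _ _
  have hcF : cF ∈ (2 : ℝ) • chainPoly P lep := by
    rw [Set.mem_smul_set]
    by_cases hμz : μ = 0
    · exact ⟨0, chainPoly_zero_mem lep, by simp [hcFdef, hμz]⟩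
    · have hμpos : 0 < μ := lt_of_le_of_ne hμ0 (Ne.symm hμz)
      refine ⟨fun y => (2 * μ)⁻¹ * max (g y) 0, ⟨fun y => by positivity, fun C hC => ?_⟩, ?_⟩
      · rw [← Finset.mul_sum]
        have h1 := hsump C hC
        rw [show (1:ℝ) = (2 * μ)⁻¹ * (2 * μ) by field_simp]
        apply mul_le_mul_of_nonneg_left h1 (by positivity)
      · funext y
        simp only [hcFdef, if_neg hμz, Pi.smul_apply, smul_eq_mul]
        field_simp
  have huF : uF ∈ (-2 : ℝ) • chainPoly P lem := by
    rw [Set.mem_smul_set]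
    by_cases hμo : μ = 1
    · exact ⟨0, chainPoly_zero_mem lem, by simp [huFdef, hμo]⟩
    · have hμlt : μ < 1 := lt_of_le_of_ne hμ1 hμo
      have h1μ : (0:ℝ) < 1 - μ := by linarith
      refine ⟨fun y => (2 * (1 - μ))⁻¹ * max (-(g y)) 0,
        ⟨fun y => by positivity, fun C hC => ?_⟩, ?_⟩
      · rw [← Finset.mul_sum]
        have h1 := hsumm C hC
        have h2 : (2 * (1 - μ))⁻¹ * (∑ y ∈ C, max (-(g y)) 0) ≤
            (2 * (1 - μ))⁻¹ * (2 * (1 - μ)) := mul_le_mul_of_nonneg_left h1 (by positivity)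
        have h3 : (2 * (1 - μ))⁻¹ * (2 * (1 - μ)) = 1 := by field_simp
        linarith
      · funext y
        simp only [huFdef, if_neg hμo, Pi.neg_apply, Pi.smul_apply, smul_eq_mul]
        have h1μ' : (1:ℝ) - μ ≠ 0 := ne_of_gt h1μ
        field_simp
  have hμcF : ∀ y, μ * cF y = max (g y) 0 := by
    intro y
    by_cases hμz : μ = 0
    · have h1 : max (g y) 0 ≤ 2 * μ := by
        have h2 : max (g y) 0 ≤ transferInv lep (fun a => max (g a) 0) y :=
          self_le_transferInv hp.refl (fun a => max (g a) 0) y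
        have h3 := hgp y
        have h4 := hFple y
        linarith
      rw [hμz] at h1
      have h1' : max (g y) 0 ≤ 0 := by linarith
      have h5 : g y ≤ 0 := le_trans (le_max_left _ _) h1'
      rw [hμz, max_eq_right h5]
      ring
    · simp only [hcFdef, if_neg hμz, Pi.smul_apply, smul_eq_mul]
      field_simp
  have h1μuF : ∀ y, (1 - μ) * uF y = -(max (-(g y)) 0) := by
    intro y
    by_cases hμo : μ = 1
    · have h1 : max (-(g y)) 0 ≤ 2 * (1 - μ) := by
        have h2 : max (-(g y)) 0 ≤ transferInv lem (fun a => max (-(g a)) 0) y :=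
          self_le_transferInv hm.refl (fun a => max (-(g a)) 0) y
        have h3 := hgm y
        have h4 := hFmle y
        linarith
      rw [hμo] at h1
      have h1' : max (-(g y)) 0 ≤ 0 := by linarith
      have h6 : -(g y) ≤ 0 := le_trans (le_max_left _ _) h1'
      rw [hμo, max_eq_right h6]
      ring
    · have h1μ : (1:ℝ) - μ ≠ 0 := by intro h; apply hμo; linarith
      simp only [huFdef, if_neg hμo, Pi.neg_apply, Pi.smul_apply, smul_eq_mul]
      field_simp
  refine ⟨(g, x.2), ?_, ?_⟩
  · simp only [doubleChainPoly]
    rw [mem_doubleHull_iff hCpc hCmc hCp0 hCm0]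
    refine ⟨μ, hμ0, hμ1, cF, hcF, uF, huF, ?_, ?_⟩
    · funext y
      simp only [Pi.add_apply, Pi.smul_apply, smul_eq_mul]
      show g y = μ * cF y + (1 - μ) * uF y
      rw [hμcF y, h1μuF y]
      rcases le_total (g y) 0 with h | h
      · rw [max_eq_right h, max_eq_left (by linarith : (0:ℝ) ≤ -(g y))]; ring
      · rw [max_eq_left h, max_eq_right (by linarith : -(g y) ≤ 0)]; ring
    · exact hx2
  · show (doubleTransfer lep lem g, x.2) = x
    rw [Prod.ext_iff]
    refine ⟨?_, rfl⟩
    show doubleTransfer lep lem g = x.1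
    funext y
    rw [hΨ y, hx1' y]
end Main2


/-- For a compatible double poset, `(g,t) ↦ (Ψ(g),t)` maps the double chain polytope
onto the double order polytope. -/
theorem doubleTransfer_image_doubleChainPoly
    (P : Type*) [Fintype P] (lep lem : P → P → Prop)
    (hp : IsPartialOrder P lep) (hm : IsPartialOrder P lem)
    (hcomp : Compatible P lep lem) :
    (fun x : (P → ℝ) × ℝ => (doubleTransfer lep lem x.1, x.2)) ''
        doubleChainPoly P lep lem =
      doubleOrderPoly P lep lem :=
  Set.Subset.antisymm (forward_incl lep lem hp hm) (backward_incl lep lem hp hm hcomp)
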